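/- For every c > 0, the function u(x) := x^{(1−α)/2} J_ν(c x^κ) satisfies the degenerate eigenfunction equation d/dx ( x^α u′(x) ) = −(κ c)² u(x) for all x ∈ (0,1). In particular, with c = j_{ν,n}, the function φ_n satisfies (x^α φ_n′)′ = −λ_n φ_n on (0,1). -/

import Mathlib

open MeasureTheory Real Set

/-- The Bessel function of the first kind of order `ν ≥ 0`, defined by its power series
`J_ν(x) = ∑_{m≥0} (-1)^m / (m! Γ(m+ν+1)) (x/2)^(2m+ν)`. -/
noncomputable def besselJ (ν : ℝ) (x : ℝ) : ℝ :=
  ∑' m : ℕ, ((-1 : ℝ) ^ m / ((m.factorial : ℝ) * Real.Gamma ((m : ℝ) + ν + 1))) *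
    (x / 2) ^ (2 * (m : ℝ) + ν)

namespace StmtAux

lemma key (α ν κ : ℝ) (hα : α ∈ Set.Ioo (0:ℝ) 1)
    (hν : ν = (1 - α) / (2 - α)) (hκ : κ = (2 - α) / 2)
    (c : ℝ) (hc : 0 < c) (x : ℝ) (hx : x ∈ Set.Ioo (0:ℝ) 1) :
    deriv (fun y : ℝ => y ^ α *
        deriv (fun z : ℝ => z ^ ((1 - α) / 2) * besselJ ν (c * z ^ κ)) y) x =
      -((κ * c) ^ 2) * (x ^ ((1 - α) / 2) * besselJ ν (c * x ^ κ)) := by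
  obtain ⟨hx0, hx1⟩ := hx
  obtain ⟨hα0, hα1⟩ := hα
  have h2α : (0:ℝ) < 2 - α := by linarith
  have hν0 : 0 < ν := by rw [hν]; exact div_pos (by linarith) h2α
  have hc2 : (0:ℝ) < c / 2 := by linarith
  have hνid : 1 - α = ν * (2 - α) := by rw [hν]; field_simp
  set q : ℝ := (c/2)^2 with hq
  set K0 : ℝ := (c/2) ^ ν / Real.Gamma (ν + 1) with hK0
  set B : ℕ → ℝ := fun m => (-1:ℝ)^m / ((m.factorial : ℝ) * Real.Gamma ((m:ℝ) + ν + 1)) *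
    (c/2) ^ (2*(m:ℝ)+ν) with hB
  set E : ℕ → ℝ := fun m => (1-α) + (2-α)*(m:ℝ) with hE
  have hΓpos : ∀ m : ℕ, 0 < Real.Gamma ((m:ℝ) + ν + 1) := fun m =>
    Real.Gamma_pos_of_pos (by positivity)
  have hΓν : 0 < Real.Gamma (ν + 1) := Real.Gamma_pos_of_pos (by positivity)
  have hK0pos : 0 < K0 := div_pos (Real.rpow_pos_of_pos hc2 ν) hΓν
  have hEpos : ∀ m : ℕ, 0 < E m := fun m => by
    have h0 : (0:ℝ) ≤ (m:ℝ) := Nat.cast_nonneg m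
    simp only [hE]; nlinarith
  have hm2 : ∀ m : ℕ, (m:ℝ) + 1 ≤ 2 ^ m := fun m => by
    exact_mod_cast Nat.succ_le_of_lt m.lt_two_pow_self
  have hE_le : ∀ m : ℕ, E m ≤ 2 * 2 ^ m := fun m => by
    have h := hm2 m
    have h0 : (0:ℝ) ≤ (m:ℝ) := Nat.cast_nonneg m
    simp only [hE]; nlinarith
  have hmR : ∀ m : ℕ, (2-α)*(m:ℝ) ≤ 2 * 2 ^ m := fun m => by
    have h := hm2 m
    have h0 : (0:ℝ) ≤ (m:ℝ) := Nat.cast_nonneg m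
    nlinarith
  have hΓfac : ∀ m : ℕ, (m.factorial : ℝ) * Real.Gamma (ν + 1) ≤ Real.Gamma ((m:ℝ) + ν + 1) := by
    intro m
    induction m with
    | zero => simp
    | succ n ih =>
      have hne : ((n:ℝ) + ν + 1) ≠ 0 := by positivity
      have hstep : Real.Gamma ((↑(n+1):ℝ) + ν + 1)
          = ((n:ℝ) + ν + 1) * Real.Gamma ((n:ℝ) + ν + 1) := by
        rw [show ((↑(n+1):ℝ) + ν + 1) = ((n:ℝ) + ν + 1) + 1 by push_cast; ring,
          Real.Gamma_add_one hne]
      rw [hstep, Nat.factorial_succ]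
      push_cast
      have h1 : (0:ℝ) < Real.Gamma ((n:ℝ)+ν+1) := hΓpos n
      have h3 : (0:ℝ) < (n.factorial : ℝ) := by exact_mod_cast n.factorial_pos
      nlinarith [mul_le_mul_of_nonneg_left ih (show (0:ℝ) ≤ (n:ℝ)+1 by positivity)]
  have hBsplit : ∀ m : ℕ, (c/2:ℝ) ^ (2*(m:ℝ)+ν) = q ^ m * (c/2) ^ ν := by
    intro m
    rw [Real.rpow_add hc2]
    congr 1
    rw [show (2*(m:ℝ)) = ((2*m : ℕ):ℝ) by push_cast; ring, Real.rpow_natCast, pow_mul]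
  have hqpos : 0 < q := by positivity
  have hBabs : ∀ m : ℕ, |B m| ≤ K0 * (q ^ m / (m.factorial : ℝ)) := by
    intro m
    have hf : (0:ℝ) < (m.factorial : ℝ) := by exact_mod_cast m.factorial_pos
    have hf1 : (1:ℝ) ≤ (m.factorial : ℝ) := by exact_mod_cast Nat.succ_le_of_lt m.factorial_pos
    have habs : |B m| = (q ^ m * (c/2) ^ ν) / ((m.factorial : ℝ) * Real.Gamma ((m:ℝ)+ν+1)) := by
      simp only [hB]
      rw [hBsplit m, abs_mul, abs_div, abs_pow, abs_neg, abs_one, one_pow,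
        abs_of_pos (mul_pos hf (hΓpos m)),
        abs_of_pos (by positivity : (0:ℝ) < q ^ m * (c/2) ^ ν)]
      ring
    rw [habs]
    have hΓ1 : Real.Gamma (ν+1) ≤ Real.Gamma ((m:ℝ)+ν+1) := by
      nlinarith [hΓfac m]
    calc (q^m * (c/2)^ν) / ((m.factorial:ℝ) * Real.Gamma ((m:ℝ)+ν+1))
        ≤ (q^m * (c/2)^ν) / ((m.factorial:ℝ) * Real.Gamma (ν+1)) := by
          gcongr
        _ = K0 * (q^m / (m.factorial:ℝ)) := by
          rw [hK0]; field_simp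
  have hsummK : ∀ K Q : ℝ, Summable (fun m : ℕ => K * (Q ^ m / (m.factorial : ℝ))) :=
    fun K Q => (Real.summable_pow_div_factorial Q).mul_left K
  set s : Set ℝ := Set.Ioo (x/2) 2 with hs
  have hso : IsOpen s := isOpen_Ioo
  have hsc : IsPreconnected s := isPreconnected_Ioo
  have hxs : x ∈ s := ⟨by linarith, by linarith⟩
  have hspos : ∀ y ∈ s, (0:ℝ) < y := fun y hy =>
    lt_trans (by positivity : (0:ℝ) < x/2) hy.1
  have hpow4 : ∀ (m : ℕ) (y : ℝ), y ∈ s → y ^ ((2-α)*(m:ℝ)) ≤ 4 ^ m := by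
    intro m y hy
    have hy0 := hspos y hy
    calc y ^ ((2-α)*(m:ℝ)) ≤ (2:ℝ) ^ ((2-α)*(m:ℝ)) :=
          Real.rpow_le_rpow hy0.le hy.2.le
            (mul_nonneg (by linarith) (Nat.cast_nonneg m))
      _ ≤ (2:ℝ) ^ (2*(m:ℝ)) := Real.rpow_le_rpow_of_exponent_le one_le_two
          (mul_le_mul_of_nonneg_right (by linarith) (Nat.cast_nonneg m))
      _ = 4 ^ m := by
          rw [show (2*(m:ℝ)) = ((2*m:ℕ):ℝ) by push_cast; ring, Real.rpow_natCast, pow_mul]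
          norm_num
  -- bound for the first differentiated series
  have hbound1 : ∀ (m : ℕ) (y : ℝ), y ∈ s →
      ‖B m * (E m * y ^ (E m - 1))‖ ≤
        (2 * K0 * (x/2) ^ (-α)) * ((8*q) ^ m / (m.factorial:ℝ)) := by
    intro m y hy
    have hy0 := hspos y hy
    have hsplit : y ^ (E m - 1) = y ^ (-α) * y ^ ((2-α)*(m:ℝ)) := by
      rw [← Real.rpow_add hy0]; congr 1; simp only [hE]; ring
    have h1 : y ^ (-α) ≤ (x/2) ^ (-α) :=
      Real.rpow_le_rpow_of_nonpos (by positivity) hy.1.le (by linarith)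
    rw [Real.norm_eq_abs, abs_mul,
      abs_of_nonneg (mul_nonneg (hEpos m).le (Real.rpow_nonneg hy0.le _))]
    calc |B m| * (E m * y ^ (E m - 1))
        ≤ (K0 * (q^m/(m.factorial:ℝ))) * ((2*2^m) * ((x/2)^(-α) * 4^m)) := by
          rw [hsplit]
          apply mul_le_mul (hBabs m) ?_ ?_ (by positivity)
          · exact mul_le_mul (hE_le m)
              (mul_le_mul h1 (hpow4 m y hy) (Real.rpow_nonneg hy0.le _)
                (Real.rpow_nonneg (by positivity) _))
              (mul_nonneg (Real.rpow_nonneg hy0.le _) (Real.rpow_nonneg hy0.le _))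
              (by positivity)
          · exact mul_nonneg (hEpos m).le
              (mul_nonneg (Real.rpow_nonneg hy0.le _) (Real.rpow_nonneg hy0.le _))
        _ = (2 * K0 * (x/2)^(-α)) * ((8*q)^m / (m.factorial:ℝ)) := by
          have h8 : ((8:ℝ)*q)^m = 2^m * (q^m * 4^m) := by
            rw [show (8:ℝ)*q = 2*(q*4) by ring, mul_pow, mul_pow]
          rw [h8]; ring
  -- bound for the second differentiated series
  have hbound2 : ∀ (m : ℕ) (y : ℝ), y ∈ s →
      ‖(B m * E m) * ((2-α)*(m:ℝ) * y ^ ((2-α)*(m:ℝ) - 1))‖ ≤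
        (4 * K0 * (x/2) ^ (-(1:ℝ))) * ((16*q) ^ m / (m.factorial:ℝ)) := by
    intro m y hy
    have hy0 := hspos y hy
    have hsplit : y ^ ((2-α)*(m:ℝ) - 1) = y ^ (-(1:ℝ)) * y ^ ((2-α)*(m:ℝ)) := by
      rw [← Real.rpow_add hy0]; congr 1; ring
    have h1 : y ^ (-(1:ℝ)) ≤ (x/2) ^ (-(1:ℝ)) :=
      Real.rpow_le_rpow_of_nonpos (by positivity) hy.1.le (by norm_num)
    have hmnn : (0:ℝ) ≤ (2-α)*(m:ℝ) := mul_nonneg (by linarith) (Nat.cast_nonneg m)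
    rw [Real.norm_eq_abs, abs_mul, abs_mul,
      abs_of_nonneg (hEpos m).le,
      abs_of_nonneg (mul_nonneg hmnn (Real.rpow_nonneg hy0.le _))]
    calc (|B m| * E m) * ((2-α)*(m:ℝ) * y ^ ((2-α)*(m:ℝ) - 1))
        ≤ ((K0 * (q^m/(m.factorial:ℝ))) * (2*2^m)) * ((2*2^m) * ((x/2)^(-(1:ℝ)) * 4^m)) := by
          rw [hsplit]
          apply mul_le_mul
          · exact mul_le_mul (hBabs m) (hE_le m) (hEpos m).le
              (mul_nonneg hK0pos.le (by positivity))
          · exact mul_le_mul (hmR m)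
              (mul_le_mul h1 (hpow4 m y hy) (Real.rpow_nonneg hy0.le _)
                (Real.rpow_nonneg (by positivity) _))
              (mul_nonneg (Real.rpow_nonneg hy0.le _) (Real.rpow_nonneg hy0.le _))
              (by positivity)
          · exact mul_nonneg hmnn
              (mul_nonneg (Real.rpow_nonneg hy0.le _) (Real.rpow_nonneg hy0.le _))
          · exact mul_nonneg (mul_nonneg hK0pos.le (by positivity)) (by positivity)
        _ = (4 * K0 * (x/2)^(-(1:ℝ))) * ((16*q)^m / (m.factorial:ℝ)) := by
          have h16 : ((16:ℝ)*q)^m = (2^m*2^m) * (q^m * 4^m) := by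
            rw [show (16:ℝ)*q = (2*2)*(q*4) by ring, mul_pow, mul_pow, mul_pow]
          rw [h16]; ring
  -- summability at x
  have hxE : ∀ m : ℕ, x ^ (E m) ≤ 1 := fun m =>
    Real.rpow_le_one hx0.le hx1.le (hEpos m).le
  have hsum0 : Summable (fun m : ℕ => B m * x ^ (E m)) := by
    apply Summable.of_norm_bounded (hsummK K0 q)
    intro m
    rw [Real.norm_eq_abs, abs_mul, abs_of_nonneg (Real.rpow_nonneg hx0.le _)]
    calc |B m| * x ^ (E m) ≤ (K0 * (q^m/(m.factorial:ℝ))) * 1 :=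
          mul_le_mul (hBabs m) (hxE m) (Real.rpow_nonneg hx0.le _)
            (mul_nonneg hK0pos.le (by positivity))
      _ = K0 * (q^m/(m.factorial:ℝ)) := mul_one _
  have hsum2x : Summable (fun m : ℕ => (B m * E m) * x ^ ((2-α)*(m:ℝ))) := by
    apply Summable.of_norm_bounded (hsummK (2*K0) (2*q))
    intro m
    have hxp : x ^ ((2-α)*(m:ℝ)) ≤ 1 :=
      Real.rpow_le_one hx0.le hx1.le (mul_nonneg (by linarith) (Nat.cast_nonneg m))
    rw [Real.norm_eq_abs, abs_mul, abs_mul, abs_of_nonneg (hEpos m).le,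
      abs_of_nonneg (Real.rpow_nonneg hx0.le _)]
    calc |B m| * E m * x ^ ((2-α)*(m:ℝ))
        ≤ (K0 * (q^m/(m.factorial:ℝ))) * (2*2^m) * 1 := by
          apply mul_le_mul _ hxp (Real.rpow_nonneg hx0.le _)
            (mul_nonneg (mul_nonneg hK0pos.le (by positivity)) (by positivity))
          exact mul_le_mul (hBabs m) (hE_le m) (hEpos m).le
            (mul_nonneg hK0pos.le (by positivity))
      _ = 2*K0 * ((2*q)^m/(m.factorial:ℝ)) := by
          rw [mul_pow]; ring
  -- first term-by-term differentiation
  have hS1 : ∀ y ∈ s, HasDerivAt (fun z : ℝ => ∑' m, B m * z ^ (E m))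
      (∑' m, B m * (E m * y ^ (E m - 1))) y := by
    intro y hy
    exact hasDerivAt_tsum_of_isPreconnected
      (hsummK (2 * K0 * (x/2) ^ (-α)) (8*q)) hso hsc
      (fun m z hz => HasDerivAt.const_mul (B m)
        (Real.hasDerivAt_rpow_const (Or.inl (hspos z hz).ne')))
      hbound1 hxs hsum0 hy
  -- second term-by-term differentiation
  have hS2 : HasDerivAt (fun z : ℝ => ∑' m, (B m * E m) * z ^ ((2-α)*(m:ℝ)))
      (∑' m, (B m * E m) * ((2-α)*(m:ℝ) * x ^ ((2-α)*(m:ℝ) - 1))) x :=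
    hasDerivAt_tsum_of_isPreconnected
      (hsummK (4 * K0 * (x/2) ^ (-(1:ℝ))) (16*q)) hso hsc
      (fun m z hz => HasDerivAt.const_mul (B m * E m)
        (Real.hasDerivAt_rpow_const (Or.inl (hspos z hz).ne')))
      hbound2 hxs hsum2x hxs
  have hsumd2 : Summable (fun m : ℕ =>
      (B m * E m) * ((2-α)*(m:ℝ) * x ^ ((2-α)*(m:ℝ) - 1))) :=
    Summable.of_norm_bounded (hsummK (4 * K0 * (x/2) ^ (-(1:ℝ))) (16*q))
      (fun m => hbound2 m x hxs)
  -- series representation of u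
  have hrepr : ∀ y : ℝ, 0 < y →
      y ^ ((1-α)/2) * besselJ ν (c * y ^ κ) = ∑' m, B m * y ^ (E m) := by
    intro y hy
    rw [besselJ, ← tsum_mul_left]
    refine tsum_congr fun m => ?_
    have hyk : (0:ℝ) ≤ y ^ κ := (Real.rpow_pos_of_pos hy κ).le
    rw [show c * y ^ κ / 2 = (c/2) * y ^ κ by ring,
      Real.mul_rpow hc2.le hyk, ← Real.rpow_mul hy.le]
    have hexp : (1-α)/2 + κ * (2*(m:ℝ)+ν) = E m := by
      simp only [hE]; rw [hκ, hν]; field_simp; ring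
    calc y ^ ((1-α)/2) * ((-1:ℝ)^m / ((m.factorial:ℝ) * Real.Gamma ((m:ℝ)+ν+1)) *
          ((c/2) ^ (2*(m:ℝ)+ν) * y ^ (κ*(2*(m:ℝ)+ν))))
        = B m * (y ^ ((1-α)/2) * y ^ (κ*(2*(m:ℝ)+ν))) := by simp only [hB]; ring
      _ = B m * y ^ (E m) := by rw [← Real.rpow_add hy, hexp]
  -- derivative of the inner function
  have hderiv_inner : ∀ y ∈ s, deriv (fun z : ℝ => z ^ ((1-α)/2) * besselJ ν (c * z ^ κ)) y
      = ∑' m, B m * (E m * y ^ (E m - 1)) := by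
    intro y hy
    have hy0 := hspos y hy
    have heq : (fun z : ℝ => z ^ ((1-α)/2) * besselJ ν (c * z ^ κ)) =ᶠ[nhds y]
        (fun z : ℝ => ∑' m, B m * z ^ (E m)) := by
      filter_upwards [Ioi_mem_nhds hy0] with z hz
      exact hrepr z hz
    rw [heq.deriv_eq, (hS1 y hy).deriv]
  -- the outer function agrees with the second series near x
  have houter : (fun y : ℝ => y ^ α *
      deriv (fun z : ℝ => z ^ ((1-α)/2) * besselJ ν (c * z ^ κ)) y)
      =ᶠ[nhds x] (fun y : ℝ => ∑' m, (B m * E m) * y ^ ((2-α)*(m:ℝ))) := by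
    filter_upwards [hso.mem_nhds hxs] with y hy
    have hy0 := hspos y hy
    rw [hderiv_inner y hy, ← tsum_mul_left]
    refine tsum_congr fun m => ?_
    have h2 : y ^ α * y ^ (E m - 1) = y ^ ((2-α)*(m:ℝ)) := by
      rw [← Real.rpow_add hy0]; congr 1; simp only [hE]; ring
    linear_combination (B m * E m) * h2
  -- the coefficient recurrence
  have hrec : ∀ n : ℕ, B (n+1) * (E (n+1) * ((2-α)*((n:ℝ)+1))) = -((κ*c)^2) * B n := by
    intro n
    have hne : ((n:ℝ) + ν + 1) ≠ 0 := by positivity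
    have hfpos : (0:ℝ) < (n.factorial:ℝ) := by exact_mod_cast n.factorial_pos
    have hΓn := hΓpos n
    have hn1 : ((n:ℝ)+1) ≠ 0 := by positivity
    have hGam : Real.Gamma ((↑(n+1):ℝ) + ν + 1)
        = ((n:ℝ)+ν+1) * Real.Gamma ((n:ℝ)+ν+1) := by
      rw [show ((↑(n+1):ℝ) + ν + 1) = ((n:ℝ)+ν+1) + 1 by push_cast; ring,
        Real.Gamma_add_one hne]
    have hpow : (c/2:ℝ) ^ (2*(↑(n+1):ℝ)+ν) = (c/2)^2 * (c/2) ^ (2*(n:ℝ)+ν) := by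
      rw [show (2*(↑(n+1):ℝ)+ν) = 2 + (2*(n:ℝ)+ν) by push_cast; ring,
        Real.rpow_add hc2, show (2:ℝ) = ((2:ℕ):ℝ) by norm_num, Real.rpow_natCast]
    have hEe : E (n+1) = (2-α) * ((n:ℝ) + 1 + ν) := by
      simp only [hE]; push_cast; linear_combination hνid
    simp only [hB]
    rw [hGam, hpow, hEe, Nat.factorial_succ, hκ]
    push_cast
    rw [pow_succ]
    field_simp
    ring
  -- put everything together
  rw [houter.deriv_eq, hS2.deriv, hrepr x hx0, ← tsum_mul_left,
    hsumd2.tsum_eq_zero_add]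
  simp only [Nat.cast_zero, mul_zero, zero_mul, zero_add]
  refine tsum_congr fun n => ?_
  have hexp2 : (2-α)*((n:ℝ)+1) - 1 = E n := by
    simp only [hE]; ring
  push_cast
  rw [hexp2]
  linear_combination x ^ (E n) * hrec n

end StmtAux

/-- For every `c > 0`, the function `u(x) = x^((1-α)/2) J_ν(c x^κ)` satisfies the degenerate
eigenfunction equation `(x^α u'(x))' = -(κc)² u(x)` on `(0,1)`; in particular, with
`c = j_{ν,n}`, the eigenfunction `φ_n` satisfies `(x^α φ_n')' = -λ_n φ_n` on `(0,1)`. -/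
theorem stmt_6 (α ν κ : ℝ) (hα : α ∈ Set.Ioo (0:ℝ) 1)
    (hν : ν = (1 - α) / (2 - α)) (hκ : κ = (2 - α) / 2)
    (j : ℕ → ℝ)
    (hjpos : ∀ n, 1 ≤ n → 0 < j n)
    (hjmono : ∀ m n, 1 ≤ m → m < n → j m < j n)
    (hjzero : ∀ n, 1 ≤ n → besselJ ν (j n) = 0)
    (hjtop : Filter.Tendsto j Filter.atTop Filter.atTop)
    (ev : ℕ → ℝ) (hev : ∀ n, ev n = (κ * j n) ^ 2)
    (φ : ℕ → ℝ → ℝ)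
    (hφ : ∀ n x, φ n x = Real.sqrt (2 * κ) * x ^ ((1 - α) / 2) *
      besselJ ν (j n * x ^ κ) / deriv (besselJ ν) (j n)) :
    (∀ c : ℝ, 0 < c → ∀ x ∈ Set.Ioo (0:ℝ) 1,
      deriv (fun y : ℝ => y ^ α *
          deriv (fun z : ℝ => z ^ ((1 - α) / 2) * besselJ ν (c * z ^ κ)) y) x =
        -((κ * c) ^ 2) * (x ^ ((1 - α) / 2) * besselJ ν (c * x ^ κ))) ∧
    (∀ n, 1 ≤ n → ∀ x ∈ Set.Ioo (0:ℝ) 1,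
      deriv (fun y : ℝ => y ^ α * deriv (φ n) y) x = -(ev n) * φ n x) := by
  refine ⟨fun c hc x hx => StmtAux.key α ν κ hα hν hκ c hc x hx, ?_⟩
  intro n hn x hx
  have hjn := hjpos n hn
  set D := deriv (besselJ ν) (j n) with hD
  set C := Real.sqrt (2*κ) / D with hC
  have hφn : φ n = fun y : ℝ => C * (y ^ ((1-α)/2) * besselJ ν (j n * y ^ κ)) := by
    funext y
    rw [hφ n y, hC]
    ring
  have h1 : (fun y : ℝ => y ^ α * deriv (φ n) y)
      = fun y : ℝ => C * (y ^ α *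
        deriv (fun z : ℝ => z ^ ((1-α)/2) * besselJ ν (j n * z ^ κ)) y) := by
    funext y
    rw [hφn, deriv_const_mul_field]
    ring
  rw [h1, deriv_const_mul_field, StmtAux.key α ν κ hα hν hκ (j n) hjn x hx,
    hev n, hφ n x, hC]
  ring
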